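/- arXiv:1407.6729 — 4 statements merged into one kernel-verified Lean document; each statement's English description precedes it below -/
import Mathlib

section
/- For complex numbers $a, x, q$ with $|q| < 1$ and $|x| < 1$, we have $\frac{(ax;q)_\infty}{(x;q)_\infty} = \sum_{k=0}^{\infty} \frac{(a;q)_k}{(q;q)_k} x^k$, where $(y;q)_\infty = \prod_{i=0}^{\infty}(1 - y q^i)$ and $(y;q)_k = \prod_{i=1}^{k}(1 - y q^{i-1})$. -/
/-- The finite q-Pochhammer symbol `(x;q)_k = ∏_{i=1}^k (1 - x q^{i-1})`. -/
noncomputable def qPoch (x q : ℂ) (k : ℕ) : ℂ :=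
  ∏ i ∈ Finset.range k, (1 - x * q ^ i)

/-- The infinite q-Pochhammer symbol `(x;q)_∞ = ∏_{i=0}^∞ (1 - x q^i)`. -/
noncomputable def qPochInf (x q : ℂ) : ℂ :=
  ∏' i : ℕ, (1 - x * q ^ i)

open Filter Topology Finset

/-- Coefficients of the q-binomial series. -/
noncomputable def qbc (a q : ℂ) (k : ℕ) : ℂ := qPoch a q k / qPoch q q k

lemma one_sub_ne_zero' {y : ℂ} (h : ‖y‖ < 1) : (1 : ℂ) - y ≠ 0 := by
  intro h0
  rw [sub_eq_zero] at h0
  rw [← h0] at h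
  simp at h

lemma norm_q_mul_pow_lt {q : ℂ} (hq : ‖q‖ < 1) (i : ℕ) : ‖q * q ^ i‖ < 1 := by
  rw [norm_mul, norm_pow]
  calc ‖q‖ * ‖q‖ ^ i ≤ ‖q‖ * 1 := by
        gcongr
        exact pow_le_one₀ (norm_nonneg q) hq.le
    _ < 1 := by simpa using hq

lemma qPoch_q_ne_zero {q : ℂ} (hq : ‖q‖ < 1) (k : ℕ) : qPoch q q k ≠ 0 :=
  Finset.prod_ne_zero_iff.mpr fun i _ => one_sub_ne_zero' (norm_q_mul_pow_lt hq i)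

lemma qbc_zero (a q : ℂ) : qbc a q 0 = 1 := by simp [qbc, qPoch]

lemma qbc_rec {q : ℂ} (hq : ‖q‖ < 1) (a : ℂ) (k : ℕ) :
    qbc a q (k + 1) * (1 - q ^ (k + 1)) = qbc a q k * (1 - a * q ^ k) := by
  have h1 := qPoch_q_ne_zero hq k
  have h2 : (1 : ℂ) - q * q ^ k ≠ 0 := one_sub_ne_zero' (norm_q_mul_pow_lt hq k)
  have e : q ^ (k + 1) = q * q ^ k := by rw [pow_succ]; ring
  simp only [qPoch] at h1
  simp only [qbc, qPoch, Finset.prod_range_succ, e]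
  simp only [div_mul_eq_mul_div]
  rw [div_eq_div_iff (mul_ne_zero h1 h2) h1]
  ring

/-- Tendsto of `q^k` to 0. -/
lemma qpow_tendsto {q : ℂ} (hq : ‖q‖ < 1) :
    Tendsto (fun k : ℕ => q ^ k) atTop (𝓝 0) :=
  tendsto_pow_atTop_nhds_zero_of_norm_lt_one hq

/-- Summability (of norms) of the q-binomial series. -/
lemma qbc_summable_norm {q : ℂ} (hq : ‖q‖ < 1) (a : ℂ) {y : ℂ} (hy : ‖y‖ < 1) :
    Summable fun k => ‖qbc a q k * y ^ k‖ := by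
  set r : ℝ := (1 + ‖y‖) / 2 with hr
  have hr1 : r < 1 := by rw [hr]; linarith
  apply summable_of_ratio_norm_eventually_le hr1
  have h0 := qpow_tendsto hq
  have h1 : Tendsto (fun k : ℕ => ‖(1 : ℂ) - a * q ^ k‖) atTop (𝓝 1) := by
    have : Tendsto (fun k : ℕ => (1 : ℂ) - a * q ^ k) atTop (𝓝 1) := by
      simpa using tendsto_const_nhds.sub (h0.const_mul a)
    simpa using this.norm
  have h2 : Tendsto (fun k : ℕ => ‖(1 : ℂ) - q ^ (k + 1)‖) atTop (𝓝 1) := by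
    have hp : Tendsto (fun k : ℕ => q ^ (k + 1)) atTop (𝓝 0) := by
      have := h0.comp (tendsto_add_atTop_nat 1)
      exact this
    have : Tendsto (fun k : ℕ => (1 : ℂ) - q ^ (k + 1)) atTop (𝓝 1) := by
      simpa using tendsto_const_nhds.sub hp
    simpa using this.norm
  have key : ∀ᶠ k in atTop, ‖(1 : ℂ) - a * q ^ k‖ * ‖y‖ - r * ‖(1 : ℂ) - q ^ (k + 1)‖ < 0 := by
    have hlim : Tendsto
        (fun k : ℕ => ‖(1 : ℂ) - a * q ^ k‖ * ‖y‖ - r * ‖(1 : ℂ) - q ^ (k + 1)‖)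
        atTop (𝓝 (1 * ‖y‖ - r * 1)) := (h1.mul_const _).sub (h2.const_mul r)
    apply hlim.eventually_lt_const
    rw [hr]; linarith
  filter_upwards [key] with k hk
  have hd : (0 : ℝ) < ‖(1 : ℂ) - q ^ (k + 1)‖ := by
    rw [norm_pos_iff]
    apply one_sub_ne_zero'
    rw [norm_pow]
    exact pow_lt_one₀ (norm_nonneg q) hq (Nat.succ_ne_zero k)
  have e : ‖qbc a q (k + 1)‖ * ‖(1 : ℂ) - q ^ (k + 1)‖ = ‖qbc a q k‖ * ‖(1 : ℂ) - a * q ^ k‖ := by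
    rw [← norm_mul, ← norm_mul, qbc_rec hq a k]
  simp only [Real.norm_eq_abs, abs_of_nonneg (norm_nonneg _), norm_mul, norm_pow]
  rw [← mul_le_mul_iff_of_pos_right hd]
  calc ‖qbc a q (k + 1)‖ * ‖y‖ ^ (k + 1) * ‖(1 : ℂ) - q ^ (k + 1)‖
      = (‖qbc a q (k + 1)‖ * ‖(1 : ℂ) - q ^ (k + 1)‖) * ‖y‖ ^ (k + 1) := by ring
    _ = (‖qbc a q k‖ * ‖(1 : ℂ) - a * q ^ k‖) * ‖y‖ ^ (k + 1) := by rw [e]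
    _ = (‖qbc a q k‖ * ‖y‖ ^ k) * (‖(1 : ℂ) - a * q ^ k‖ * ‖y‖) := by ring
    _ ≤ (‖qbc a q k‖ * ‖y‖ ^ k) * (r * ‖(1 : ℂ) - q ^ (k + 1)‖) := by
        apply mul_le_mul_of_nonneg_left (by linarith) (by positivity)
    _ = r * (‖qbc a q k‖ * ‖y‖ ^ k) * ‖(1 : ℂ) - q ^ (k + 1)‖ := by ring

lemma qbc_summable {q : ℂ} (hq : ‖q‖ < 1) (a : ℂ) {y : ℂ} (hy : ‖y‖ < 1) :
    Summable fun k => qbc a q k * y ^ k :=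
  (qbc_summable_norm hq a hy).of_norm

/-- Summability of the logs of the factors of the infinite product. -/
lemma qlog_summable {q : ℂ} (hq : ‖q‖ < 1) (z : ℂ) :
    Summable fun n : ℕ => Complex.log (1 - z * q ^ n) := by
  apply Summable.of_norm_bounded_eventually_nat (g := fun n => 3 / 2 * ‖z * q ^ n‖)
  · apply Summable.mul_left
    have : Summable fun n : ℕ => ‖z‖ * ‖q‖ ^ n :=
      (summable_geometric_of_lt_one (norm_nonneg q) hq).mul_left ‖z‖
    exact this.congr fun n => by rw [norm_mul, norm_pow]
  · have h0 : Tendsto (fun n : ℕ => ‖z * q ^ n‖) atTop (𝓝 0) := by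
      have := (qpow_tendsto hq).const_mul z
      simpa using this.norm
    have hev : ∀ᶠ n in atTop, ‖z * q ^ n‖ ≤ 1 / 2 :=
      h0.eventually_le_const (by norm_num)
    filter_upwards [hev] with n hn
    have : (1 : ℂ) - z * q ^ n = 1 + -(z * q ^ n) := by ring
    rw [this]
    have := Complex.norm_log_one_add_half_le_self (z := -(z * q ^ n)) (by simpa using hn)
    simpa using this

lemma qfactor_ne_zero {q : ℂ} (hq : ‖q‖ < 1) {z : ℂ} (hz : ‖z‖ < 1) (n : ℕ) :
    (1 : ℂ) - z * q ^ n ≠ 0 := by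
  apply one_sub_ne_zero'
  rw [norm_mul, norm_pow]
  calc ‖z‖ * ‖q‖ ^ n ≤ ‖z‖ * 1 := by
        gcongr
        exact pow_le_one₀ (norm_nonneg q) hq.le
    _ < 1 := by simpa using hz

/-- Multipliability of the q-Pochhammer infinite product. -/
lemma qPochInf_multipliable {q : ℂ} (hq : ‖q‖ < 1) (z : ℂ) :
    Multipliable fun n : ℕ => (1 : ℂ) - z * q ^ n := by
  by_cases h : ∀ n, (1 : ℂ) - z * q ^ n ≠ 0
  · exact Complex.multipliable_of_summable_log (f := fun n => (1 : ℂ) - z * q ^ n)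
      (qlog_summable hq z)
  · push_neg at h
    obtain ⟨n0, hn0⟩ := h
    refine ⟨0, ?_⟩
    rw [HasProd]
    have : ∀ᶠ s in atTop, ∏ i ∈ s, ((1 : ℂ) - z * q ^ i) = 0 := by
      filter_upwards [Filter.eventually_ge_atTop {n0}] with s hs
      exact Finset.prod_eq_zero (hs (Finset.mem_singleton_self n0)) hn0
    exact Tendsto.congr' (by filter_upwards [this] with s hs using hs.symm) tendsto_const_nhds

/-- The infinite product is nonvanishing when all factors are nonzero. -/
lemma qPochInf_ne_zero {q : ℂ} (hq : ‖q‖ < 1) {z : ℂ} (hz : ‖z‖ < 1) :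
    qPochInf z q ≠ 0 := by
  have := Complex.cexp_tsum_eq_tprod (f := fun n => (1 : ℂ) - z * q ^ n)
    (fun n => qfactor_ne_zero hq hz n) (qlog_summable hq z)
  rw [qPochInf, ← this]
  exact Complex.exp_ne_zero _

/-- The q-binomial theorem:
`(ax;q)_∞ / (x;q)_∞ = ∑_{k=0}^∞ ((a;q)_k / (q;q)_k) x^k` for `|q| < 1`, `|x| < 1`. -/
theorem q_binomial_theorem (a x q : ℂ) (hq : ‖q‖ < 1) (hx : ‖x‖ < 1) :
    qPochInf (a * x) q / qPochInf x q = ∑' k : ℕ, qPoch a q k / qPoch q q k * x ^ k := by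
  set c : ℕ → ℂ := qbc a q with hc
  set F : ℂ → ℂ := fun y => ∑' k : ℕ, c k * y ^ k with hF
  -- the goal's series is F x
  have hgoal : (∑' k : ℕ, qPoch a q k / qPoch q q k * x ^ k) = F x := rfl
  rw [hgoal]
  -- functional equation
  have hfe : ∀ y : ℂ, ‖y‖ < 1 → (1 - y) * F y = (1 - a * y) * F (q * y) := by
    intro y hy
    have hqy : ‖q * y‖ < 1 := by
      rw [norm_mul]
      calc ‖q‖ * ‖y‖ ≤ 1 * ‖y‖ := by gcongr
        _ < 1 := by simpa using hy
    have S1 : Summable fun k => c k * y ^ k := qbc_summable hq a hy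
    have S1' : Summable fun k => c (k + 1) * y ^ (k + 1) :=
      (summable_nat_add_iff (f := fun k => c k * y ^ k) 1).mpr S1
    have S1y : Summable fun k => c k * y ^ (k + 1) :=
      (S1.mul_left y).congr fun k => by ring
    have S2 : Summable fun k => c k * (q * y) ^ k := qbc_summable hq a hqy
    have S2' : Summable fun k => c (k + 1) * (q * y) ^ (k + 1) :=
      (summable_nat_add_iff (f := fun k => c k * (q * y) ^ k) 1).mpr S2
    have S2y : Summable fun k => a * c k * y * (q * y) ^ k :=
      (S2.mul_left (a * y)).congr fun k => by ring
    have h1 : F y = 1 + ∑' k, c (k + 1) * y ^ (k + 1) := by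
      simp only [hF]
      rw [Summable.tsum_eq_zero_add S1]
      simp [hc, qbc_zero]
    have h2 : y * F y = ∑' k, c k * y ^ (k + 1) := by
      simp only [hF]
      rw [← tsum_mul_left]
      exact tsum_congr fun k => by ring
    have h3 : F (q * y) = 1 + ∑' k, c (k + 1) * (q * y) ^ (k + 1) := by
      simp only [hF]
      rw [Summable.tsum_eq_zero_add S2]
      simp [hc, qbc_zero]
    have h4 : (a * y) * F (q * y) = ∑' k, a * c k * y * (q * y) ^ k := by
      simp only [hF]
      rw [← tsum_mul_left]
      exact tsum_congr fun k => by ring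
    have lhs_eq : (1 - y) * F y = 1 + ∑' k, (c (k + 1) * y ^ (k + 1) - c k * y ^ (k + 1)) := by
      rw [sub_mul, one_mul, h2, h1, Summable.tsum_sub S1' S1y]
      ring
    have rhs_eq : (1 - a * y) * F (q * y) =
        1 + ∑' k, (c (k + 1) * (q * y) ^ (k + 1) - a * c k * y * (q * y) ^ k) := by
      rw [sub_mul, one_mul, h4, h3, Summable.tsum_sub S2' S2y]
      ring
    rw [lhs_eq, rhs_eq]
    congr 1
    apply tsum_congr
    intro k
    have hr := qbc_rec hq a k
    rw [← hc] at hr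
    linear_combination y ^ (k + 1) * hr
  -- iteration
  have hqn : ∀ n : ℕ, ‖q ^ n * x‖ < 1 := by
    intro n
    rw [norm_mul, norm_pow]
    calc ‖q‖ ^ n * ‖x‖ ≤ 1 * ‖x‖ := by
          gcongr
          exact pow_le_one₀ (norm_nonneg q) hq.le
      _ < 1 := by simpa using hx
  have hiter : ∀ n : ℕ,
      F x * ∏ i ∈ range n, ((1 : ℂ) - x * q ^ i) =
      F (q ^ n * x) * ∏ i ∈ range n, ((1 : ℂ) - a * x * q ^ i) := by
    intro n
    induction n with
    | zero => simp
    | succ n ih =>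
      have hfe' := hfe (q ^ n * x) (hqn n)
      have harg : q * (q ^ n * x) = q ^ (n + 1) * x := by ring
      rw [harg] at hfe'
      rw [Finset.prod_range_succ, Finset.prod_range_succ]
      linear_combination (1 - x * q ^ n) * ih +
        (∏ i ∈ range n, ((1 : ℂ) - a * x * q ^ i)) * hfe'
  -- limit of F (q^n x)
  have hS : Summable fun k => ‖c (k + 1) * x ^ (k + 1)‖ :=
    (summable_nat_add_iff (f := fun k => ‖c k * x ^ k‖) 1).mpr (qbc_summable_norm hq a hx)
  set S : ℝ := ∑' k, ‖c (k + 1) * x ^ (k + 1)‖ with hSdef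
  have hFlim : Tendsto (fun n : ℕ => F (q ^ n * x)) atTop (𝓝 1) := by
    rw [tendsto_iff_norm_sub_tendsto_zero]
    have hbound : ∀ n : ℕ, ‖F (q ^ n * x) - 1‖ ≤ ‖q‖ ^ n * S := by
      intro n
      have Sn : Summable fun k => c k * (q ^ n * x) ^ k := qbc_summable hq a (hqn n)
      have h1 : F (q ^ n * x) - 1 = ∑' k, c (k + 1) * (q ^ n * x) ^ (k + 1) := by
        simp only [hF]
        rw [Summable.tsum_eq_zero_add Sn]
        simp [hc, qbc_zero]
      rw [h1]
      have hnorm : Summable fun k => ‖c (k + 1) * (q ^ n * x) ^ (k + 1)‖ :=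
        (summable_nat_add_iff (f := fun k => ‖c k * (q ^ n * x) ^ k‖) 1).mpr
          (qbc_summable_norm hq a (hqn n))
      calc ‖∑' k, c (k + 1) * (q ^ n * x) ^ (k + 1)‖
          ≤ ∑' k, ‖c (k + 1) * (q ^ n * x) ^ (k + 1)‖ := norm_tsum_le_tsum_norm hnorm
        _ ≤ ∑' k, ‖q‖ ^ n * ‖c (k + 1) * x ^ (k + 1)‖ := by
            refine Summable.tsum_le_tsum ?_ hnorm (hS.mul_left _)
            intro k
            have e : c (k + 1) * (q ^ n * x) ^ (k + 1) =
                (q ^ n) ^ (k + 1) * (c (k + 1) * x ^ (k + 1)) := by ring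
            rw [e, norm_mul, norm_pow, norm_pow]
            apply mul_le_mul_of_nonneg_right _ (norm_nonneg _)
            calc (‖q‖ ^ n) ^ (k + 1) = ‖q‖ ^ (n * (k + 1)) := by rw [← pow_mul]
              _ ≤ ‖q‖ ^ n := pow_le_pow_of_le_one (norm_nonneg q) hq.le
                  (Nat.le_mul_of_pos_right n (Nat.succ_pos k))
        _ = ‖q‖ ^ n * S := by rw [tsum_mul_left]
    have hgeo : Tendsto (fun n : ℕ => ‖q‖ ^ n * S) atTop (𝓝 0) := by
      have := tendsto_pow_atTop_nhds_zero_of_lt_one (norm_nonneg q) hq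
      simpa using this.mul_const S
    exact squeeze_zero (fun n => norm_nonneg _) hbound hgeo
  -- limits of partial products
  have hprodx : Tendsto (fun n : ℕ => ∏ i ∈ range n, ((1 : ℂ) - x * q ^ i)) atTop
      (𝓝 (qPochInf x q)) := (qPochInf_multipliable hq x).hasProd.tendsto_prod_nat
  have hprodax : Tendsto (fun n : ℕ => ∏ i ∈ range n, ((1 : ℂ) - a * x * q ^ i)) atTop
      (𝓝 (qPochInf (a * x) q)) := (qPochInf_multipliable hq (a * x)).hasProd.tendsto_prod_nat
  have hlim1 : Tendsto (fun n : ℕ => F x * ∏ i ∈ range n, ((1 : ℂ) - x * q ^ i)) atTop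
      (𝓝 (F x * qPochInf x q)) := hprodx.const_mul _
  have hlim2 : Tendsto (fun n : ℕ => F (q ^ n * x) * ∏ i ∈ range n, ((1 : ℂ) - a * x * q ^ i))
      atTop (𝓝 (1 * qPochInf (a * x) q)) := hFlim.mul hprodax
  have heq : F x * qPochInf x q = 1 * qPochInf (a * x) q :=
    tendsto_nhds_unique (hlim1.congr fun n => hiter n) hlim2
  rw [one_mul] at heq
  rw [div_eq_iff (qPochInf_ne_zero hq hx), ← heq]
end

section
/- Let $\alpha \in \mathbb{C}$ and $N \ge 1$, with $1 - \alpha^j \neq 0$ for $1 \le j \le N$. Then the symmetrization identity $\sum_{\sigma \in S_N} \prod_{1 \le i < j \le N} \frac{1 - (\alpha+1) z_{\sigma(i)} + \alpha z_{\sigma(i)} z_{\sigma(j)}}{z_{\sigma(j)} - z_{\sigma(i)}} = \frac{(\alpha;\alpha)_N}{(1-\alpha)^N}$ holds, where $(\alpha;\alpha)_N = \prod_{i=1}^N (1-\alpha^i)$, for all tuples $(z_1,\dots,z_N)$ of distinct complex numbers for which the denominators are nonzero. -/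
section SymmetrizationAux
open Polynomial Finset

lemma lagrangeA {ι : Type*} [DecidableEq ι] (s : Finset ι) (v : ι → ℂ)
    (hv : Set.InjOn v s) (f : ℂ[X]) (hf : f.degree < s.card) :
    f.coeff (s.card - 1) = ∑ i ∈ s, f.eval (v i) * (∏ j ∈ s.erase i, (v i - v j))⁻¹ := by
  have h := Lagrange.eq_interpolate hv hf
  conv_lhs => rw [h]
  rw [Lagrange.interpolate_apply, finset_sum_coeff]
  refine Finset.sum_congr rfl fun i hi => ?_
  rw [coeff_C_mul]
  congr 1
  have hd : (Lagrange.basis s v i).natDegree = s.card - 1 := Lagrange.natDegree_basis hv hi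
  rw [← hd, coeff_natDegree, Lagrange.basis, leadingCoeff_prod]
  rw [← Finset.prod_inv_distrib]
  refine Finset.prod_congr rfl fun j hj => ?_
  have hij : v i ≠ v j := fun hh => (Finset.mem_erase.mp hj).1
    (hv (Finset.mem_erase.mp hj).2 hi hh.symm)
  rw [Lagrange.basisDivisor]
  rw [leadingCoeff_mul, leadingCoeff_C, leadingCoeff_X_sub_C, mul_one]

lemma erase_zero_prod {n : ℕ} (g : Fin (n+1) → ℂ) :
    ∏ j ∈ (univ : Finset (Fin (n+1))).erase 0, g j = ∏ k : Fin n, g k.succ := by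
  rw [Fin.univ_succ, Finset.erase_cons, Finset.prod_map]
  rfl

lemma erase_succ_prod {n : ℕ} (k : Fin n) (g : Fin (n+1) → ℂ) :
    ∏ j ∈ (univ : Finset (Fin (n+1))).erase k.succ, g j
      = g 0 * ∏ m ∈ univ.erase k, g m.succ := by
  rw [Fin.univ_succ]
  rw [Finset.erase_cons_of_ne _ (by simp [Fin.succ_ne_zero, Ne, eq_comm])]
  rw [Finset.prod_cons]
  congr 1
  rw [show k.succ = (⟨Fin.succ, Fin.succ_injective n⟩ : Fin n ↪ Fin (n+1)) k from rfl,
    ← Finset.map_erase, Finset.prod_map]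
  rfl

lemma lemK (n : ℕ) (q : ℂ) (x : Fin n → ℂ) (hx : Function.Injective x) :
    ∑ k : Fin n, ∏ m ∈ univ.erase k, (x k - q * x m) / (x k - x m)
      = ∑ i ∈ range n, q ^ i := by
  by_cases hq : q = 1
  · subst hq
    have : ∀ k : Fin n, ∏ m ∈ univ.erase k, (x k - 1 * x m) / (x k - x m) = 1 := by
      intro k
      refine Finset.prod_eq_one fun m hm => ?_
      have hne : x k - x m ≠ 0 := sub_ne_zero.mpr (fun h => (Finset.mem_erase.mp hm).1 (hx h.symm))
      rw [one_mul]
      exact div_self hne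
    rw [Finset.sum_congr rfl fun k _ => this k, Finset.sum_const, Finset.card_univ]
    simp
  · have h1q : (1 : ℂ) - q ≠ 0 := sub_ne_zero.mpr (Ne.symm hq)
    set P : ℂ[X] := ∑ k : Fin n, C ((∏ m ∈ univ.erase k, (x k - x m))⁻¹) *
        ∏ m ∈ univ.erase k, (C (x k - q * x m) - C (1 - q) * X) with hPdef
    have hPeval : ∀ y : ℂ, P.eval y = ∑ k : Fin n,
        (∏ m ∈ univ.erase k, (x k - x m))⁻¹ *
          ∏ m ∈ univ.erase k, (x k - q * x m - (1 - q) * y) := by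
      intro y
      rw [hPdef, Polynomial.eval_finset_sum]
      refine Finset.sum_congr rfl fun k _ => ?_
      rw [eval_mul, eval_C, eval_prod]
      congr 1
      refine Finset.prod_congr rfl fun m _ => ?_
      simp
    have key : ∀ y : ℂ, y ∉ Set.range x → P.eval y = ∑ i ∈ range n, q ^ i := by
      intro y hy
      have hyx : ∀ m, y - x m ≠ 0 := fun m h =>
        hy ⟨m, (sub_eq_zero.mp h).symm⟩
      set v : Fin (n+1) → ℂ := Fin.cases y x with hvdef
      have hv0 : v 0 = y := rfl
      have hvs : ∀ k : Fin n, v k.succ = x k := fun k => rfl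
      have hv : Function.Injective v := by
        intro a b hab
        rcases Fin.eq_zero_or_eq_succ a with rfl | ⟨i, rfl⟩ <;>
          rcases Fin.eq_zero_or_eq_succ b with rfl | ⟨j, rfl⟩
        · rfl
        · rw [hv0, hvs] at hab; exact absurd ⟨j, hab.symm⟩ hy
        · rw [hv0, hvs] at hab; exact absurd ⟨i, hab⟩ hy
        · rw [hvs, hvs] at hab; rw [hx hab]
      set f : ℂ[X] := ∏ m : Fin n, (X - C (q * x m + (1 - q) * y)) with hfdef
      have hfm : f.Monic := monic_prod_of_monic _ _ fun m _ => monic_X_sub_C _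
      have hfd : f.natDegree = n := by
        rw [hfdef, natDegree_prod _ _ fun m _ => X_sub_C_ne_zero _,
          Finset.sum_congr rfl fun m _ => natDegree_X_sub_C (q * x m + (1 - q) * y)]
        simp
      have hcard : (univ : Finset (Fin (n+1))).card = n + 1 := by simp
      have hdeg : f.degree < ((univ : Finset (Fin (n+1))).card : ℕ) := by
        rw [hcard]
        have hle : f.degree ≤ (n : WithBot ℕ) := by rw [← hfd]; exact degree_le_natDegree
        exact lt_of_le_of_lt hle (by exact_mod_cast Nat.lt_succ_self n)
      have hmain := lagrangeA univ v hv.injOn f hdeg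
      rw [hcard] at hmain
      simp only [Nat.add_sub_cancel] at hmain
      have hcoeff : f.coeff n = 1 := by
        rw [← hfd]; exact hfm.coeff_natDegree
      rw [hcoeff, Fin.sum_univ_succ] at hmain
      -- first term is q^n
      have hterm0 : f.eval (v 0) * (∏ j ∈ univ.erase (0 : Fin (n+1)), (v 0 - v j))⁻¹ = q ^ n := by
        have h1 : f.eval (v 0) = q ^ n * ∏ m : Fin n, (y - x m) := by
          rw [hv0, hfdef, eval_prod]
          have : ∀ m : Fin n, eval y (X - C (q * x m + (1 - q) * y)) = q * (y - x m) := by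
            intro m; simp; ring
          rw [Finset.prod_congr rfl fun m _ => this m, Finset.prod_mul_distrib]
          simp
        have h2 : ∏ j ∈ univ.erase (0 : Fin (n+1)), (v 0 - v j) = ∏ m : Fin n, (y - x m) := by
          rw [erase_zero_prod (fun j => v 0 - v j)]
          exact Finset.prod_congr rfl fun m _ => by rw [hv0, hvs]
        rw [h1, h2, mul_assoc, mul_inv_cancel₀, mul_one]
        exact Finset.prod_ne_zero_iff.mpr fun m _ => hyx m
      rw [hterm0] at hmain
      -- succ terms
      have htermk : ∀ k : Fin n,
          f.eval (v k.succ) * (∏ j ∈ univ.erase k.succ, (v k.succ - v j))⁻¹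
            = (1 - q) * ((∏ m ∈ univ.erase k, (x k - x m))⁻¹ *
                ∏ m ∈ univ.erase k, (x k - q * x m - (1 - q) * y)) := by
        intro k
        have hxky : x k - y ≠ 0 := fun h => (hyx k) (by rw [← neg_sub] at h; simpa using congrArg Neg.neg h)
        have h1 : f.eval (v k.succ)
            = (1 - q) * (x k - y) * ∏ m ∈ univ.erase k, (x k - q * x m - (1 - q) * y) := by
          rw [hvs, hfdef, eval_prod]
          have hall : ∀ m : Fin n, eval (x k) (X - C (q * x m + (1 - q) * y))
              = x k - q * x m - (1 - q) * y := by intro m; simp; ring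
          rw [Finset.prod_congr rfl fun m _ => hall m,
            ← Finset.mul_prod_erase univ _ (Finset.mem_univ k)]
          congr 1
          ring
        have h2 : ∏ j ∈ univ.erase k.succ, (v k.succ - v j)
            = (x k - y) * ∏ m ∈ univ.erase k, (x k - x m) := by
          rw [erase_succ_prod k (fun j => v k.succ - v j)]
          simp only [hv0, hvs]
        rw [h1, h2, mul_inv]
        rw [show (1 - q) * (x k - y) * (∏ m ∈ univ.erase k, (x k - q * x m - (1 - q) * y)) *
              ((x k - y)⁻¹ * (∏ m ∈ univ.erase k, (x k - x m))⁻¹)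
            = ((x k - y) * (x k - y)⁻¹) * ((1 - q) * ((∏ m ∈ univ.erase k, (x k - x m))⁻¹ *
              ∏ m ∈ univ.erase k, (x k - q * x m - (1 - q) * y))) from by ring,
          mul_inv_cancel₀ hxky, one_mul]
      rw [Finset.sum_congr rfl fun k _ => htermk k, ← Finset.mul_sum, ← hPeval y] at hmain
      -- solve for P.eval y
      rw [geom_sum_eq hq]
      have hq1 : q - 1 ≠ 0 := sub_ne_zero.mpr hq
      rw [eq_div_iff hq1]
      linear_combination hmain
    have hP : P = C (∑ i ∈ range n, q ^ i) := by
      apply Polynomial.eq_of_infinite_eval_eq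
      have hsub : (Set.range x)ᶜ ⊆ {y | P.eval y = eval y (C (∑ i ∈ range n, q ^ i))} := by
        intro y hy
        rw [Set.mem_setOf_eq, eval_C]
        exact key y hy
      exact ((Set.finite_range x).infinite_compl).mono hsub
    have h0 := congrArg (eval 0) hP
    rw [hPeval 0, eval_C] at h0
    rw [← h0]
    refine Finset.sum_congr rfl fun k _ => ?_
    rw [Finset.prod_div_distrib, div_eq_mul_inv, mul_comm]
    congr 1
    exact Finset.prod_congr rfl fun m _ => by ring


lemma lemK' (n : ℕ) (q : ℂ) (A B : Fin n → ℂ)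
    (h : ∀ k m : Fin n, k ≠ m → A k * B m - A m * B k ≠ 0)
    (hAB : ∀ m : Fin n, A m ≠ 0 ∨ B m ≠ 0) :
    ∑ k : Fin n, ∏ m ∈ univ.erase k, (A k * B m - q * (A m * B k)) / (A k * B m - A m * B k)
      = ∑ i ∈ range n, q ^ i := by
  set S : Set ℂ := {t : ℂ | ∃ m : Fin n, B m + t * A m = 0} with hS
  have hfin : S.Finite := by
    have hU : S = ⋃ m : Fin n, {t : ℂ | B m + t * A m = 0} := by
      ext t; simp [hS]
    rw [hU]
    apply Set.finite_iUnion
    intro m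
    rcases eq_or_ne (A m) 0 with hA0 | hA0
    · have hB0 : B m ≠ 0 := (hAB m).resolve_left (by simp [hA0])
      convert Set.finite_empty
      ext t; simp [hA0, hB0]
    · apply Set.Finite.subset (Set.finite_singleton (-(B m) / A m))
      intro t ht
      simp only [Set.mem_setOf_eq] at ht
      simp only [Set.mem_singleton_iff]
      field_simp
      linear_combination ht
  set Q : ℂ[X] := ∑ k : Fin n, C ((∏ m ∈ univ.erase k, (A k * B m - A m * B k))⁻¹) *
      ∏ m ∈ univ.erase k, (C (A k * B m - q * (A m * B k)) + C ((1 - q) * (A k * A m)) * X)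
    with hQdef
  have hQeval : ∀ t : ℂ, Q.eval t = ∑ k : Fin n,
      (∏ m ∈ univ.erase k, (A k * B m - A m * B k))⁻¹ *
        ∏ m ∈ univ.erase k, (A k * B m - q * (A m * B k) + (1 - q) * (A k * A m) * t) := by
    intro t
    rw [hQdef, Polynomial.eval_finset_sum]
    refine Finset.sum_congr rfl fun k _ => ?_
    rw [eval_mul, eval_C, eval_prod]
    congr 1
    refine Finset.prod_congr rfl fun m _ => ?_
    simp
  have key : ∀ t : ℂ, t ∉ S → Q.eval t = ∑ i ∈ range n, q ^ i := by
    intro t ht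
    have hB' : ∀ m : Fin n, B m + t * A m ≠ 0 := by
      intro m hm
      exact ht ⟨m, hm⟩
    set u : Fin n → ℂ := fun m => A m / (B m + t * A m) with hu
    have huinj : Function.Injective u := by
      intro k m hkm
      by_contra hne
      apply h k m hne
      rw [hu] at hkm
      simp only at hkm
      rw [div_eq_div_iff (hB' k) (hB' m)] at hkm
      linear_combination hkm
    have hupair : ∀ k m : Fin n, k ≠ m →
        (u k - q * u m) / (u k - u m)
          = (A k * B m - q * (A m * B k) + (1 - q) * (A k * A m) * t)
              / (A k * B m - A m * B k) := by
      intro k m hkm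
      have e1 : u k - q * u m
          = (A k * B m - q * (A m * B k) + (1 - q) * (A k * A m) * t)
              / ((B k + t * A k) * (B m + t * A m)) := by
        rw [hu]
        simp only
        rw [← mul_div_assoc, div_sub_div _ _ (hB' k) (hB' m)]
        congr 1
        ring
      have e2 : u k - u m
          = (A k * B m - A m * B k) / ((B k + t * A k) * (B m + t * A m)) := by
        rw [hu]
        simp only
        rw [div_sub_div _ _ (hB' k) (hB' m)]
        congr 1
        ring
      have hD : (B k + t * A k) * (B m + t * A m) ≠ 0 := mul_ne_zero (hB' k) (hB' m)
      rw [e1, e2, div_div_eq_mul_div, div_mul_eq_mul_div, mul_div_assoc, div_self hD, mul_one]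
    have hK := lemK n q u huinj
    rw [← hK, hQeval t]
    refine Finset.sum_congr rfl fun k _ => ?_
    rw [Finset.prod_congr rfl (fun m hm => hupair k m
      (fun hh => (Finset.mem_erase.mp hm).1 hh.symm)),
      Finset.prod_div_distrib, div_eq_mul_inv, mul_comm]
  have hQ : Q = C (∑ i ∈ range n, q ^ i) := by
    apply Polynomial.eq_of_infinite_eval_eq
    have hsub : Sᶜ ⊆ {t | Q.eval t = eval t (C (∑ i ∈ range n, q ^ i))} := by
      intro t htc
      rw [Set.mem_setOf_eq, eval_C]
      exact key t htc
    exact (hfin.infinite_compl).mono hsub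
  have h0 := congrArg (eval 0) hQ
  rw [hQeval 0, eval_C] at h0
  rw [← h0]
  refine Finset.sum_congr rfl fun k _ => ?_
  rw [Finset.prod_div_distrib, div_eq_mul_inv, mul_comm]
  congr 1
  exact Finset.prod_congr rfl fun m _ => by ring


lemma keyZ (n : ℕ) (α : ℂ) (hα1 : α ≠ 1) (z : Fin n → ℂ) (hz : Function.Injective z) :
    ∑ k : Fin n, ∏ m ∈ univ.erase k, (1 - (α + 1) * z k + α * z k * z m) / (z m - z k)
      = ∑ i ∈ range n, α ^ i := by
  have h1α : (1 : ℂ) - α ≠ 0 := sub_ne_zero.mpr (Ne.symm hα1)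
  set A : Fin n → ℂ := fun i => z i - 1 with hA
  set B : Fin n → ℂ := fun i => α * z i - 1 with hB
  have hcross : ∀ k m : Fin n, A k * B m - A m * B k = (1 - α) * (z m - z k) := by
    intro k m; rw [hA, hB]; simp only; ring
  have h : ∀ k m : Fin n, k ≠ m → A k * B m - A m * B k ≠ 0 := by
    intro k m hkm
    rw [hcross]
    exact mul_ne_zero h1α (sub_ne_zero.mpr fun hh => hkm (hz hh.symm))
  have hAB : ∀ m : Fin n, A m ≠ 0 ∨ B m ≠ 0 := by
    intro m
    rcases eq_or_ne (z m) 1 with h1 | h1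
    · right
      rw [hB]
      simp only [h1, mul_one]
      exact sub_ne_zero.mpr hα1
    · left
      exact sub_ne_zero.mpr h1
  have hnum : ∀ k m : Fin n, A k * B m - α * (A m * B k)
      = (1 - α) * (1 - (α + 1) * z k + α * z k * z m) := by
    intro k m; rw [hA, hB]; simp only; ring
  rw [← lemK' n α A B h hAB]
  refine Finset.sum_congr rfl fun k _ => Finset.prod_congr rfl fun m hm => ?_
  rw [hcross, hnum, mul_div_mul_left _ _ h1α]

lemma pairs_eq (n : ℕ) (g : Fin n × Fin n → ℂ) :
    ∏ p ∈ univ.filter (fun p : Fin n × Fin n => p.1 < p.2), g p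
      = ∏ i : Fin n, ∏ j ∈ Ioi i, g (i, j) := by
  rw [Finset.prod_sigma']
  refine Finset.prod_nbij' (fun p => (⟨p.1, p.2⟩ : Σ _ : Fin n, Fin n))
    (fun x => (x.1, x.2)) ?_ ?_ ?_ ?_ ?_ <;> simp

lemma pairs_succ (n : ℕ) (g : Fin (n+1) × Fin (n+1) → ℂ) :
    ∏ p ∈ univ.filter (fun p : Fin (n+1) × Fin (n+1) => p.1 < p.2), g p
      = (∏ j : Fin n, g (0, j.succ)) *
        ∏ p ∈ univ.filter (fun p : Fin n × Fin n => p.1 < p.2), g (p.1.succ, p.2.succ) := by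
  rw [pairs_eq (n+1) g, pairs_eq n (fun p => g (p.1.succ, p.2.succ)), Fin.prod_univ_succ]
  congr 1
  · rw [Fin.Ioi_zero_eq_map, Finset.prod_map]
    rfl
  · refine Finset.prod_congr rfl fun i _ => ?_
    rw [Fin.Ioi_succ, Finset.prod_map]
    rfl

lemma mainN (n : ℕ) (α : ℂ) (hα1 : α ≠ 1) :
    ∀ z : Fin n → ℂ, Function.Injective z →
    (∑ σ : Equiv.Perm (Fin n),
        ∏ p ∈ univ.filter (fun p : Fin n × Fin n => p.1 < p.2),
          (1 - (α + 1) * z (σ p.1) + α * z (σ p.1) * z (σ p.2)) / (z (σ p.2) - z (σ p.1)))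
      = ∏ k ∈ range n, (∑ i ∈ range (k+1), α ^ i) := by
  induction n with
  | zero =>
    intro z hz
    simp [Finset.filter_eq_empty_iff]
  | succ n ih =>
    intro z hz
    have hsum := (Equiv.sum_comp (Equiv.Perm.decomposeFin.symm)
      (fun σ : Equiv.Perm (Fin (n+1)) =>
        ∏ p ∈ univ.filter (fun p : Fin (n+1) × Fin (n+1) => p.1 < p.2),
          (1 - (α + 1) * z (σ p.1) + α * z (σ p.1) * z (σ p.2)) / (z (σ p.2) - z (σ p.1)))).symm
    rw [hsum, Fintype.sum_prod_type]
    -- for each p, the inner function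
    set w : Fin (n+1) → Fin n → ℂ := fun p j => z (Equiv.swap 0 p j.succ) with hw
    have hwinj : ∀ p, Function.Injective (w p) := by
      intro p a b hab
      exact Fin.succ_injective n ((Equiv.swap 0 p).injective (hz hab))
    have step : ∀ (p : Fin (n+1)) (τ : Equiv.Perm (Fin n)),
        (∏ pr ∈ univ.filter (fun pr : Fin (n+1) × Fin (n+1) => pr.1 < pr.2),
          (1 - (α + 1) * z (Equiv.Perm.decomposeFin.symm (p, τ) pr.1)
            + α * z (Equiv.Perm.decomposeFin.symm (p, τ) pr.1)
              * z (Equiv.Perm.decomposeFin.symm (p, τ) pr.2))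
            / (z (Equiv.Perm.decomposeFin.symm (p, τ) pr.2)
              - z (Equiv.Perm.decomposeFin.symm (p, τ) pr.1)))
        = (∏ m ∈ univ.erase p, (1 - (α + 1) * z p + α * z p * z m) / (z m - z p)) *
          (∏ pr ∈ univ.filter (fun pr : Fin n × Fin n => pr.1 < pr.2),
            (1 - (α + 1) * w p (τ pr.1) + α * w p (τ pr.1) * w p (τ pr.2))
              / (w p (τ pr.2) - w p (τ pr.1))) := by
      intro p τ
      rw [pairs_succ n (fun pr =>
          (1 - (α + 1) * z (Equiv.Perm.decomposeFin.symm (p, τ) pr.1)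
            + α * z (Equiv.Perm.decomposeFin.symm (p, τ) pr.1)
              * z (Equiv.Perm.decomposeFin.symm (p, τ) pr.2))
            / (z (Equiv.Perm.decomposeFin.symm (p, τ) pr.2)
              - z (Equiv.Perm.decomposeFin.symm (p, τ) pr.1)))]
      simp only [Equiv.Perm.decomposeFin_symm_apply_zero,
        Equiv.Perm.decomposeFin_symm_apply_succ]
      congr 1
      -- first factor
      have hre : ∏ j : Fin n,
          (1 - (α + 1) * z p + α * z p * z (Equiv.swap 0 p (τ j).succ))
            / (z (Equiv.swap 0 p (τ j).succ) - z p)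
          = ∏ j : Fin n,
          (1 - (α + 1) * z p + α * z p * z (Equiv.swap 0 p j.succ))
            / (z (Equiv.swap 0 p j.succ) - z p) :=
        Equiv.prod_comp τ (fun j =>
          (1 - (α + 1) * z p + α * z p * z (Equiv.swap 0 p j.succ))
            / (z (Equiv.swap 0 p j.succ) - z p))
      rw [hre]
      have himg : (univ.erase (0 : Fin (n+1))).image (Equiv.swap 0 p) = univ.erase p := by
        ext m
        simp only [Finset.mem_image, Finset.mem_erase, Finset.mem_univ, and_true]
        constructor
        · rintro ⟨a, ha, rfl⟩
          intro hcontra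
          apply ha
          have : Equiv.swap 0 p a = Equiv.swap 0 p 0 := by
            rw [Equiv.swap_apply_left]; exact hcontra
          exact (Equiv.swap 0 p).injective this
        · intro hm
          refine ⟨Equiv.swap 0 p m, ?_, by simp [Equiv.swap_apply_self]⟩
          intro h0
          apply hm
          have : Equiv.swap 0 p m = Equiv.swap 0 p p := by
            rw [Equiv.swap_apply_right]; exact h0
          exact (Equiv.swap 0 p).injective this
      rw [← erase_zero_prod (fun m =>
        (1 - (α + 1) * z p + α * z p * z (Equiv.swap 0 p m))
          / (z (Equiv.swap 0 p m) - z p))]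
      rw [← himg, Finset.prod_image (fun a _ b _ hab => (Equiv.swap 0 p).injective hab)]
    rw [Finset.sum_congr rfl fun p _ => Finset.sum_congr rfl fun τ _ => step p τ]
    rw [Finset.sum_congr rfl fun p _ => (Finset.mul_sum _ _ _).symm]
    rw [Finset.sum_congr rfl fun p (_ : p ∈ univ) => by rw [ih (w p) (hwinj p)]]
    rw [← Finset.sum_mul, keyZ (n+1) α hα1 z hz, prod_range_succ, mul_comm]


end SymmetrizationAux

/-- Symmetrization identity (Lemma 3.12 of the paper):
`∑_{σ ∈ S_N} ∏_{i<j} (1-(α+1)z_{σ(i)}+α z_{σ(i)} z_{σ(j)})/(z_{σ(j)}-z_{σ(i)})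
  = (α;α)_N/(1-α)^N`. -/
theorem symmetrization_identity (N : ℕ) (hN : 1 ≤ N) (α : ℂ)
    (hα : ∀ j : ℕ, 1 ≤ j → j ≤ N → α ^ j ≠ 1)
    (z : Fin N → ℂ) (hz : Function.Injective z) :
    (∑ σ : Equiv.Perm (Fin N),
        ∏ p ∈ Finset.univ.filter (fun p : Fin N × Fin N => p.1 < p.2),
          (1 - (α + 1) * z (σ p.1) + α * z (σ p.1) * z (σ p.2))
            / (z (σ p.2) - z (σ p.1)))
      = (∏ i ∈ Finset.range N, (1 - α ^ (i + 1))) / (1 - α) ^ N := by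
  have hα1 : α ≠ 1 := by
    have := hα 1 le_rfl hN
    simpa using this
  have h1α : (1 : ℂ) - α ≠ 0 := sub_ne_zero.mpr (Ne.symm hα1)
  rw [mainN N α hα1 z hz]
  have hterm : ∀ k : ℕ, (∑ i ∈ Finset.range (k+1), α ^ i) = (1 - α ^ (k+1)) / (1 - α) := by
    intro k
    rw [geom_sum_eq hα1, div_eq_div_iff (sub_ne_zero.mpr hα1) h1α]
    ring
  rw [Finset.prod_congr rfl fun k _ => hterm k, Finset.prod_div_distrib,
    Finset.prod_const, Finset.card_range]
end

section
/- For any complex $\alpha$ with $\prod_{i=1}^N(1-\alpha^i) \neq 0$ and pairwise distinct complex numbers $u_1,\dots,u_N$: $\sum_{\sigma \in S_N} \prod_{1 \le i < j \le N} \frac{u_{\sigma(i)} - \alpha u_{\sigma(j)}}{u_{\sigma(i)} - u_{\sigma(j)}} = \frac{(\alpha;\alpha)_N}{(1-\alpha)^N}$, where $(\alpha;\alpha)_N = \prod_{i=1}^N(1-\alpha^i)$. -/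
open Finset Polynomial

/-- Key identity, all-nonzero case: via Lagrange interpolation / partial fractions. -/
lemma macdonald_keyA0 {ι : Type*} [DecidableEq ι] (α : ℂ) (s : Finset ι) (u : ι → ℂ)
    (hu : Set.InjOn u s) (hz : ∀ k ∈ s, u k ≠ 0) :
    ∑ k ∈ s, ∏ j ∈ s.erase k, (u k - α * u j) / (u k - u j)
      = ∑ i ∈ Finset.range s.card, α ^ i := by
  rcases eq_or_ne α 1 with rfl | hα1
  · have h1 : ∀ k ∈ s, ∏ j ∈ s.erase k, (u k - 1 * u j) / (u k - u j) = 1 := by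
      intro k hk
      refine Finset.prod_eq_one fun j hj => ?_
      have hne : u k - u j ≠ 0 := sub_ne_zero.mpr
        (fun h => (Finset.mem_erase.mp hj).1 (hu (Finset.mem_erase.mp hj).2 hk h.symm))
      rw [one_mul]; exact div_self hne
    rw [Finset.sum_congr rfl h1]
    simp
  rcases Finset.eq_empty_or_nonempty s with rfl | hs
  · simp
  obtain ⟨m, hm⟩ : ∃ m, s.card = m + 1 :=
    ⟨s.card - 1, (Nat.succ_pred_eq_of_pos (Finset.card_pos.mpr hs)).symm⟩
  have h1α : (1 : ℂ) - α ≠ 0 := sub_ne_zero.mpr (Ne.symm hα1)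
  set P : ℂ := ∏ j ∈ s, u j with hP
  have hPne : P ≠ 0 := Finset.prod_ne_zero_iff.mpr hz
  set Q : ℂ[X] := (∏ j ∈ s, (X - C (α * u j))) - ∏ j ∈ s, (X - C (u j)) with hQ
  have hmon1 : (∏ j ∈ s, (X - C (α * u j))).Monic :=
    monic_prod_of_monic _ _ fun _ _ => monic_X_sub_C _
  have hmon2 : (∏ j ∈ s, (X - C (u j))).Monic :=
    monic_prod_of_monic _ _ fun _ _ => monic_X_sub_C _
  have hdeg1 : (∏ j ∈ s, (X - C (α * u j))).natDegree = s.card := by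
    rw [natDegree_prod_of_monic _ _ fun _ _ => monic_X_sub_C _]
    simp only [Polynomial.natDegree_X_sub_C]
    simp
  have hdeg2 : (∏ j ∈ s, (X - C (u j))).natDegree = s.card := by
    rw [natDegree_prod_of_monic _ _ fun _ _ => monic_X_sub_C _]
    simp only [Polynomial.natDegree_X_sub_C]
    simp
  have hQdeg : Q.degree < (s.card : ℕ) := by
    have hd : (∏ j ∈ s, (X - C (α * u j))).degree = (∏ j ∈ s, (X - C (u j))).degree := by
      rw [Polynomial.degree_eq_natDegree hmon1.ne_zero,
        Polynomial.degree_eq_natDegree hmon2.ne_zero, hdeg1, hdeg2]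
    have h : Q.degree < (∏ j ∈ s, (X - C (α * u j))).degree :=
      Polynomial.degree_sub_lt hd hmon1.ne_zero
        (hmon1.leadingCoeff.trans hmon2.leadingCoeff.symm)
    rwa [Polynomial.degree_eq_natDegree hmon1.ne_zero, hdeg1] at h
  have hinterp : Q = Lagrange.interpolate s u fun i => Q.eval (u i) :=
    Lagrange.eq_interpolate hu hQdeg
  have hev := congrArg (Polynomial.eval 0) hinterp
  rw [Lagrange.interpolate_apply, Polynomial.eval_finset_sum] at hev
  simp only [Polynomial.eval_mul, Polynomial.eval_C] at hev
  -- compute each summand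
  have key : ∀ k ∈ s, Q.eval (u k) * Polynomial.eval 0 (Lagrange.basis s u k)
      = (1 - α) * ((-1) ^ m * P) * ∏ j ∈ s.erase k, (u k - α * u j) / (u k - u j) := by
    intro k hk
    have hQev : Q.eval (u k)
        = (u k - α * u k) * ∏ j ∈ s.erase k, (u k - α * u j) := by
      rw [hQ, Polynomial.eval_sub, Polynomial.eval_prod, Polynomial.eval_prod]
      simp only [Polynomial.eval_sub, Polynomial.eval_X, Polynomial.eval_C]
      rw [Finset.prod_eq_zero (f := fun j => u k - u j) hk (sub_self _), sub_zero,
        ← Finset.mul_prod_erase s _ hk]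
    have hBev : Polynomial.eval 0 (Lagrange.basis s u k)
        = (∏ j ∈ s.erase k, (u k - u j)⁻¹) * ((-1) ^ m * ∏ j ∈ s.erase k, u j) := by
      rw [Lagrange.basis, Polynomial.eval_prod]
      have : ∀ j ∈ s.erase k, Polynomial.eval 0 (Lagrange.basisDivisor (u k) (u j))
          = (u k - u j)⁻¹ * (-1 * u j) := by
        intro j hj
        rw [Lagrange.basisDivisor]
        simp only [Polynomial.eval_mul, Polynomial.eval_C, Polynomial.eval_sub,
          Polynomial.eval_X]
        ring
      rw [Finset.prod_congr rfl this, Finset.prod_mul_distrib, Finset.prod_mul_distrib,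
        Finset.prod_const, Finset.card_erase_of_mem hk, hm, Nat.add_sub_cancel]
    rw [hQev, hBev]
    have hsplit : ∏ j ∈ s.erase k, (u k - α * u j) / (u k - u j)
        = (∏ j ∈ s.erase k, (u k - α * u j)) * ∏ j ∈ s.erase k, (u k - u j)⁻¹ := by
      rw [← Finset.prod_mul_distrib]
      exact Finset.prod_congr rfl fun j _ => div_eq_mul_inv _ _
    rw [hsplit]
    have hmul : u k * ∏ j ∈ s.erase k, u j = P := Finset.mul_prod_erase s u hk
    rw [← hmul]
    ring
  rw [Finset.sum_congr rfl key, ← Finset.mul_sum] at hev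
  have hQ0 : Q.eval 0 = (-1) ^ (m + 1) * (α ^ (m + 1) * P) - (-1) ^ (m + 1) * P := by
    rw [hQ, Polynomial.eval_sub, Polynomial.eval_prod, Polynomial.eval_prod]
    simp only [Polynomial.eval_sub, Polynomial.eval_X, Polynomial.eval_C, zero_sub]
    have e1 : ∏ j ∈ s, -(α * u j) = (-1) ^ (m + 1) * (α ^ (m + 1) * P) := by
      have : ∀ j ∈ s, -(α * u j) = (-1 * α) * u j := fun j _ => by ring
      rw [Finset.prod_congr rfl this, Finset.prod_mul_distrib, Finset.prod_const, hm]
      ring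
    have e2 : ∏ j ∈ s, -u j = (-1) ^ (m + 1) * P := by
      have : ∀ j ∈ s, -u j = -1 * u j := fun j _ => by ring
      rw [Finset.prod_congr rfl this, Finset.prod_mul_distrib, Finset.prod_const, hm]
    rw [e1, e2]
  rw [hQ0] at hev
  -- cancel (-1)^m * P
  have hS : (1 - α) * (∑ k ∈ s, ∏ j ∈ s.erase k, (u k - α * u j) / (u k - u j))
      = 1 - α ^ (m + 1) := by
    have hc : ((-1 : ℂ) ^ m * P) ≠ 0 := by
      apply mul_ne_zero _ hPne
      exact pow_ne_zero _ (by norm_num)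
    apply mul_left_cancel₀ hc
    rw [show ((-1:ℂ)^m * P) * ((1 - α) * ∑ k ∈ s, ∏ j ∈ s.erase k,
        (u k - α * u j) / (u k - u j))
      = (1 - α) * ((-1)^m * P) * ∑ k ∈ s, ∏ j ∈ s.erase k,
        (u k - α * u j) / (u k - u j) from by ring, ← hev]
    ring
  rw [hm, geom_sum_eq hα1, eq_div_iff (sub_ne_zero.mpr hα1)]
  linear_combination -hS

/-- Key identity in general (some variable may be zero). -/
lemma macdonald_keyA {ι : Type*} [DecidableEq ι] (α : ℂ) (s : Finset ι) (u : ι → ℂ)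
    (hu : Set.InjOn u s) :
    ∑ k ∈ s, ∏ j ∈ s.erase k, (u k - α * u j) / (u k - u j)
      = ∑ i ∈ Finset.range s.card, α ^ i := by
  by_cases hz : ∀ k ∈ s, u k ≠ 0
  · exact macdonald_keyA0 α s u hu hz
  push_neg at hz
  obtain ⟨k0, hk0, hz0⟩ := hz
  have hz' : ∀ j ∈ s.erase k0, u j ≠ 0 := fun j hj h =>
    (Finset.mem_erase.mp hj).1 (hu (Finset.mem_erase.mp hj).2 hk0 (h.trans hz0.symm))
  obtain ⟨m, hm⟩ : ∃ m, s.card = m + 1 :=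
    ⟨s.card - 1, (Nat.succ_pred_eq_of_pos (Finset.card_pos.mpr ⟨k0, hk0⟩)).symm⟩
  rw [← Finset.add_sum_erase _ _ hk0]
  have hT0 : ∏ j ∈ s.erase k0, (u k0 - α * u j) / (u k0 - u j) = α ^ m := by
    have h1 : ∀ j ∈ s.erase k0, (u k0 - α * u j) / (u k0 - u j) = α := by
      intro j hj
      rw [hz0, zero_sub, zero_sub, neg_div_neg_eq, mul_div_assoc,
        div_self (hz' j hj), mul_one]
    rw [Finset.prod_congr rfl h1, Finset.prod_const, Finset.card_erase_of_mem hk0, hm,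
      Nat.add_sub_cancel]
  have hTi : ∀ i ∈ s.erase k0, ∏ j ∈ s.erase i, (u i - α * u j) / (u i - u j)
      = ∏ j ∈ (s.erase k0).erase i, (u i - α * u j) / (u i - u j) := by
    intro i hi
    have hk0i : k0 ∈ s.erase i :=
      Finset.mem_erase.mpr ⟨fun h => (Finset.mem_erase.mp hi).1 h.symm, hk0⟩
    rw [← Finset.mul_prod_erase _ _ hk0i, hz0, mul_zero, sub_zero,
      div_self (hz' i hi), one_mul, Finset.erase_right_comm]
  rw [Finset.sum_congr rfl hTi, hT0,
    macdonald_keyA0 α (s.erase k0) u (hu.mono (Finset.coe_subset.mpr (Finset.erase_subset _ _)))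
      hz', Finset.card_erase_of_mem hk0, hm, Nat.add_sub_cancel,
    Finset.sum_range_succ]
  ring

/-- Splitting the product over ordered pairs of `Fin (n+1)`. -/
lemma macdonald_pair_split {n : ℕ} (f : Fin (n + 1) → Fin (n + 1) → ℂ) :
    ∏ p ∈ Finset.univ.filter (fun p : Fin (n + 1) × Fin (n + 1) => p.1 < p.2), f p.1 p.2
      = (∏ j : Fin n, f 0 j.succ) *
        ∏ p ∈ Finset.univ.filter (fun p : Fin n × Fin n => p.1 < p.2), f p.1.succ p.2.succ := by
  have hset : Finset.univ.filter (fun p : Fin (n + 1) × Fin (n + 1) => p.1 < p.2)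
      = (Finset.univ.image fun j : Fin n => ((0 : Fin (n + 1)), j.succ))
        ∪ ((Finset.univ.filter (fun p : Fin n × Fin n => p.1 < p.2)).image
            fun p => (p.1.succ, p.2.succ)) := by
    ext p
    simp only [Finset.mem_filter, Finset.mem_union, Finset.mem_image, Finset.mem_univ, true_and]
    constructor
    · intro hlt
      rcases Fin.eq_zero_or_eq_succ p.1 with h1 | ⟨a, ha⟩
      · left
        rcases Fin.eq_zero_or_eq_succ p.2 with h2 | ⟨b, hb⟩
        · exfalso; rw [h1, h2] at hlt; exact lt_irrefl _ hlt
        · exact ⟨b, by rw [← h1, ← hb]⟩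
      · right
        rcases Fin.eq_zero_or_eq_succ p.2 with h2 | ⟨b, hb⟩
        · exfalso; rw [h2] at hlt; exact Fin.not_lt_zero _ hlt
        · refine ⟨(a, b), ?_, by rw [← ha, ← hb]⟩
          rw [ha, hb] at hlt
          exact Fin.succ_lt_succ_iff.mp hlt
    · rintro (⟨j, hj⟩ | ⟨q, hq, hq2⟩)
      · rw [← hj]; exact Fin.succ_pos j
      · rw [← hq2]; exact Fin.succ_lt_succ_iff.mpr hq
  have hdisj : Disjoint (Finset.univ.image fun j : Fin n => ((0 : Fin (n + 1)), j.succ))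
      ((Finset.univ.filter (fun p : Fin n × Fin n => p.1 < p.2)).image
        fun p => (p.1.succ, p.2.succ)) := by
    rw [Finset.disjoint_left]
    rintro p hp hp'
    simp only [Finset.mem_image, Finset.mem_univ, true_and, Finset.mem_filter] at hp hp'
    obtain ⟨j, hj⟩ := hp
    obtain ⟨q, _, hq2⟩ := hp'
    rw [← hj] at hq2
    simp [Prod.ext_iff, Fin.succ_ne_zero, eq_comm] at hq2
  rw [hset, Finset.prod_union hdisj, Finset.prod_image (fun a _ b _ h => by
      simpa using Fin.succ_injective _ (congrArg Prod.snd h)),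
    Finset.prod_image (fun a _ b _ h => by
      have h1 := Fin.succ_injective _ (congrArg Prod.fst h)
      have h2 := Fin.succ_injective _ (congrArg Prod.snd h)
      exact Prod.ext h1 h2)]

lemma macdonald_aux : ∀ (N : ℕ) (α : ℂ), (∏ i ∈ Finset.range N, (1 - α ^ (i + 1))) ≠ 0 →
    ∀ u : Fin N → ℂ, Function.Injective u →
    (∑ σ : Equiv.Perm (Fin N),
        ∏ p ∈ Finset.univ.filter (fun p : Fin N × Fin N => p.1 < p.2),
          (u (σ p.1) - α * u (σ p.2)) / (u (σ p.1) - u (σ p.2)))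
      = (∏ i ∈ Finset.range N, (1 - α ^ (i + 1))) / (1 - α) ^ N := by
  intro N
  induction N with
  | zero =>
    intro α hα u hu
    simp [Finset.filter_eq_empty_iff]
  | succ n ih =>
    intro α hα u hu
    have hfac : ∀ i ∈ Finset.range (n + 1), (1 : ℂ) - α ^ (i + 1) ≠ 0 :=
      Finset.prod_ne_zero_iff.mp hα
    have h1α : (1 : ℂ) - α ≠ 0 := by
      simpa using hfac 0 (Finset.mem_range.mpr n.succ_pos)
    have hα1 : α ≠ 1 := fun h => h1α (by rw [h]; ring)
    have hα' : (∏ i ∈ Finset.range n, (1 - α ^ (i + 1))) ≠ 0 :=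
      Finset.prod_ne_zero_iff.mpr fun i hi =>
        hfac i (Finset.mem_range.mpr (lt_trans (Finset.mem_range.mp hi) n.lt_succ_self))
    rw [← Equiv.sum_comp Equiv.Perm.decomposeFin.symm, Fintype.sum_prod_type]
    have hstep : ∀ p : Fin (n + 1),
        (∑ e : Equiv.Perm (Fin n),
          ∏ q ∈ Finset.univ.filter (fun q : Fin (n + 1) × Fin (n + 1) => q.1 < q.2),
            (u ((Equiv.Perm.decomposeFin.symm (p, e)) q.1)
              - α * u ((Equiv.Perm.decomposeFin.symm (p, e)) q.2)) /
            (u ((Equiv.Perm.decomposeFin.symm (p, e)) q.1)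
              - u ((Equiv.Perm.decomposeFin.symm (p, e)) q.2)))
        = (∏ j ∈ Finset.univ.erase p, (u p - α * u j) / (u p - u j)) *
          ((∏ i ∈ Finset.range n, (1 - α ^ (i + 1))) / (1 - α) ^ n) := by
      intro p
      set v : Fin n → ℂ := fun j => u (Equiv.swap 0 p j.succ) with hv
      have hvinj : Function.Injective v := fun a b hab =>
        Fin.succ_injective _ ((Equiv.swap 0 p).injective (hu hab))
      have hW : (∏ j : Fin n, (u p - α * v j) / (u p - v j))
          = ∏ j ∈ Finset.univ.erase p, (u p - α * u j) / (u p - u j) := by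
        refine Finset.prod_bij (fun j _ => Equiv.swap 0 p j.succ) ?_ ?_ ?_ ?_
        · intro a _
          refine Finset.mem_erase.mpr ⟨?_, Finset.mem_univ _⟩
          intro h
          have h' : Equiv.swap 0 p a.succ = Equiv.swap 0 p 0 := by
            rw [Equiv.swap_apply_left]; exact h
          exact Fin.succ_ne_zero a ((Equiv.swap 0 p).injective h')
        · intro a _ b _ h
          exact Fin.succ_injective _ ((Equiv.swap 0 p).injective h)
        · intro q hq
          have hq0 : Equiv.swap 0 p q ≠ 0 := by
            intro h
            have : q = p := by
              have := congrArg (Equiv.swap 0 p) h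
              rwa [Equiv.swap_apply_self, Equiv.swap_apply_left] at this
            exact (Finset.mem_erase.mp hq).1 this
          refine ⟨(Equiv.swap 0 p q).pred hq0, Finset.mem_univ _, ?_⟩
          show Equiv.swap 0 p ((Equiv.swap 0 p q).pred hq0).succ = q
          rw [Fin.succ_pred, Equiv.swap_apply_self]
        · intro a _
          rfl
      have hterm : ∀ e : Equiv.Perm (Fin n),
          (∏ q ∈ Finset.univ.filter (fun q : Fin (n + 1) × Fin (n + 1) => q.1 < q.2),
            (u ((Equiv.Perm.decomposeFin.symm (p, e)) q.1)
              - α * u ((Equiv.Perm.decomposeFin.symm (p, e)) q.2)) /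
            (u ((Equiv.Perm.decomposeFin.symm (p, e)) q.1)
              - u ((Equiv.Perm.decomposeFin.symm (p, e)) q.2)))
          = (∏ j : Fin n, (u p - α * v j) / (u p - v j)) *
            ∏ q ∈ Finset.univ.filter (fun q : Fin n × Fin n => q.1 < q.2),
              (v (e q.1) - α * v (e q.2)) / (v (e q.1) - v (e q.2)) := by
        intro e
        rw [macdonald_pair_split (f := fun i j =>
          (u ((Equiv.Perm.decomposeFin.symm (p, e)) i)
              - α * u ((Equiv.Perm.decomposeFin.symm (p, e)) j)) /
            (u ((Equiv.Perm.decomposeFin.symm (p, e)) i)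
              - u ((Equiv.Perm.decomposeFin.symm (p, e)) j)))]
        congr 1
        · rw [← Equiv.prod_comp e (fun j => (u p - α * v j) / (u p - v j))]
          refine Finset.prod_congr rfl fun j _ => ?_
          rw [Equiv.Perm.decomposeFin_symm_apply_zero,
            Equiv.Perm.decomposeFin_symm_apply_succ]
        · refine Finset.prod_congr rfl fun q hq => ?_
          rw [Equiv.Perm.decomposeFin_symm_apply_succ,
            Equiv.Perm.decomposeFin_symm_apply_succ]
      rw [Finset.sum_congr rfl fun e _ => hterm e, ← Finset.mul_sum,
        ih α hα' v hvinj, hW]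
    rw [Finset.sum_congr rfl fun p _ => hstep p, ← Finset.sum_mul]
    have hkey := macdonald_keyA α (Finset.univ : Finset (Fin (n + 1))) u
      (hu.injOn)
    rw [Finset.card_univ, Fintype.card_fin] at hkey
    rw [hkey, geom_sum_eq hα1, Finset.prod_range_succ]
    rw [div_mul_div_comm]
    rw [div_eq_div_iff (by
        apply mul_ne_zero (sub_ne_zero.mpr hα1) (pow_ne_zero _ h1α))
      (pow_ne_zero _ h1α)]
    ring

/-- Macdonald's symmetrization identity (Chapter III, (1.4)):
`∑_{σ ∈ S_N} ∏_{i<j} (u_{σ(i)} - α u_{σ(j)})/(u_{σ(i)} - u_{σ(j)}) = (α;α)_N/(1-α)^N`. -/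
theorem macdonald_symmetrization (N : ℕ) (α : ℂ)
    (hα : (∏ i ∈ Finset.range N, (1 - α ^ (i + 1))) ≠ 0)
    (u : Fin N → ℂ) (hu : Function.Injective u) :
    (∑ σ : Equiv.Perm (Fin N),
        ∏ p ∈ Finset.univ.filter (fun p : Fin N × Fin N => p.1 < p.2),
          (u (σ p.1) - α * u (σ p.2)) / (u (σ p.1) - u (σ p.2)))
      = (∏ i ∈ Finset.range N, (1 - α ^ (i + 1))) / (1 - α) ^ N :=
  macdonald_aux N α hα u hu
end

section
/- Let $\{f_n\}_{n\ge 1}$ be functions $\mathbb{R}\to[0,1]$, each strictly decreasing, with $\lim_{x\to-\infty} f_n(x) = 1$ and $\lim_{x\to+\infty} f_n(x) = 0$, and such that for each $\delta > 0$, $f_n \to \mathbf{1}(x \le 0)$ uniformly on $\mathbb{R}\setminus[-\delta,\delta]$. Define $f_n^r(x) = f_n(x - r)$. Let $X_n$ be real random variables such that for every $r \in \mathbb{R}$, $\mathbb{E}[f_n^r(X_n)] \to p(r)$ as $n \to \infty$, where $p$ is a continuous probability distribution function. Then $X_n$ converges in distribution to the random variable with distribution function $p$. -/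
open MeasureTheory Filter

/-- Lemma 5.2 of the paper (Lemma 4.1.39 of Borodin–Corwin): convergence of
expectations of shifted smoothed indicators implies convergence in distribution. -/
theorem smoothed_indicator_convergence
    (Ω : ℕ → Type*) [∀ n, MeasurableSpace (Ω n)]
    (μ : ∀ n, Measure (Ω n)) [∀ n, IsProbabilityMeasure (μ n)]
    (X : ∀ n, Ω n → ℝ) (hX : ∀ n, Measurable (X n))
    (f : ℕ → ℝ → ℝ)
    (hf01 : ∀ n x, f n x ∈ Set.Icc (0 : ℝ) 1)
    (hanti : ∀ n, StrictAnti (f n))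
    (hbot : ∀ n, Tendsto (f n) atBot (nhds 1))
    (htop : ∀ n, Tendsto (f n) atTop (nhds 0))
    (hunif : ∀ δ : ℝ, 0 < δ →
      TendstoUniformlyOn f (fun x => if x ≤ 0 then (1 : ℝ) else 0) atTop
        {x : ℝ | δ ≤ |x|})
    (p : ℝ → ℝ) (hp_cont : Continuous p) (hp_mono : Monotone p)
    (hp0 : Tendsto p atBot (nhds 0)) (hp1 : Tendsto p atTop (nhds 1))
    (hconv : ∀ r : ℝ,
      Tendsto (fun n => ∫ ω, f n (X n ω - r) ∂(μ n)) atTop (nhds (p r))) :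
    ∀ r : ℝ,
      Tendsto (fun n => ((μ n) {ω | X n ω ≤ r}).toReal) atTop (nhds (p r)) := by
  intro r
  rw [Metric.tendsto_atTop]
  intro ε hε
  -- choose δ from continuity of p at r
  obtain ⟨δ', hδ', hδ'p⟩ :=
    Metric.continuousAt_iff.mp (hp_cont.continuousAt (x := r)) (ε / 3) (by linarith)
  set δ : ℝ := δ' / 2 with hδdef
  have hδ : 0 < δ := by positivity
  have hprU : |p (r + δ) - p r| < ε / 3 := by
    have h := hδ'p (show dist (r + δ) r < δ' by
      rw [Real.dist_eq, show r + δ - r = δ by ring, abs_of_pos hδ]; linarith)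
    rwa [Real.dist_eq] at h
  have hprL : |p (r - δ) - p r| < ε / 3 := by
    have h := hδ'p (show dist (r - δ) r < δ' by
      rw [Real.dist_eq, show r - δ - r = -δ by ring, abs_neg, abs_of_pos hδ]; linarith)
    rwa [Real.dist_eq] at h
  -- eventual facts
  have h1 : ∀ᶠ n in atTop,
      |(∫ ω, f n (X n ω - (r + δ)) ∂ μ n) - p (r + δ)| < ε / 3 := by
    have := (hconv (r + δ)).eventually (Metric.ball_mem_nhds (p (r + δ)) (by linarith : (0:ℝ) < ε/3))
    filter_upwards [this] with n hn
    rwa [Real.dist_eq] at hn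
  have h2 : ∀ᶠ n in atTop,
      |(∫ ω, f n (X n ω - (r - δ)) ∂ μ n) - p (r - δ)| < ε / 3 := by
    have := (hconv (r - δ)).eventually (Metric.ball_mem_nhds (p (r - δ)) (by linarith : (0:ℝ) < ε/3))
    filter_upwards [this] with n hn
    rwa [Real.dist_eq] at hn
  have h3 : ∀ᶠ n in atTop, ∀ x ∈ {x : ℝ | δ ≤ |x|},
      dist (if x ≤ 0 then (1 : ℝ) else 0) (f n x) < ε / 3 :=
    (Metric.tendstoUniformlyOn_iff.mp (hunif δ hδ)) (ε / 3) (by linarith)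
  have key : ∀ᶠ n in atTop,
      dist ((μ n {ω | X n ω ≤ r}).toReal) (p r) < ε := by
    filter_upwards [h1, h2, h3] with n hn1 hn2 hn3
    have hs : MeasurableSet {ω | X n ω ≤ r} := measurableSet_le (hX n) measurable_const
    have hfm : ∀ c : ℝ, Measurable fun ω => f n (X n ω - c) := fun c =>
      ((hanti n).antitone.measurable).comp ((hX n).sub measurable_const)
    have hfint : ∀ c : ℝ, Integrable (fun ω => f n (X n ω - c)) (μ n) := by
      intro c
      refine Integrable.mono' (integrable_const 1) ((hfm c).aestronglyMeasurable) ?_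
      filter_upwards with ω
      rw [Real.norm_eq_abs, abs_le]
      exact ⟨by linarith [(hf01 n (X n ω - c)).1], (hf01 n (X n ω - c)).2⟩
    have hind : ((μ n) {ω | X n ω ≤ r}).toReal
        = ∫ ω, Set.indicator {ω | X n ω ≤ r} (fun _ => (1 : ℝ)) ω ∂ μ n := by
      rw [integral_indicator_const (1 : ℝ) hs, smul_eq_mul, mul_one, Measure.real]
    -- upper bound
    have hub : ((μ n) {ω | X n ω ≤ r}).toReal
        ≤ (∫ ω, f n (X n ω - (r + δ)) ∂ μ n) + ε / 3 := by
      rw [hind]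
      have := integral_mono (μ := μ n)
        ((integrable_const (1:ℝ)).indicator hs)
        ((hfint (r + δ)).add (integrable_const (ε/3)))
        (fun ω => by
          by_cases h : X n ω ≤ r
          · simp only [Pi.add_apply]
            rw [Set.indicator_of_mem (show ω ∈ {ω | X n ω ≤ r} from h)]
            have hy : X n ω - (r + δ) ≤ -δ := by linarith
            have hmem : δ ≤ |X n ω - (r + δ)| := by
              rw [abs_of_nonpos (by linarith)]; linarith
            have hd := hn3 _ hmem
            rw [if_pos (by linarith : X n ω - (r + δ) ≤ 0), Real.dist_eq] at hd
            have := abs_lt.mp hd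
            linarith [this.2]
          · simp only [Pi.add_apply]
            rw [Set.indicator_of_notMem (show ω ∉ {ω | X n ω ≤ r} from h)]
            have := (hf01 n (X n ω - (r + δ))).1
            linarith)
      calc ∫ ω, Set.indicator {ω | X n ω ≤ r} (fun _ => (1:ℝ)) ω ∂ μ n
          ≤ ∫ ω, (f n (X n ω - (r + δ)) + ε / 3) ∂ μ n := this
        _ = (∫ ω, f n (X n ω - (r + δ)) ∂ μ n) + ε / 3 := by
            rw [integral_add (hfint (r + δ)) (integrable_const _), integral_const,
              Measure.real, measure_univ, ENNReal.toReal_one, one_smul]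
    -- lower bound
    have hlb : (∫ ω, f n (X n ω - (r - δ)) ∂ μ n)
        ≤ ((μ n) {ω | X n ω ≤ r}).toReal + ε / 3 := by
      rw [hind]
      have := integral_mono (μ := μ n) (hfint (r - δ))
        (((integrable_const (1:ℝ)).indicator hs).add (integrable_const (ε/3)))
        (fun ω => by
          by_cases h : X n ω ≤ r
          · simp only [Pi.add_apply]
            rw [Set.indicator_of_mem (show ω ∈ {ω | X n ω ≤ r} from h)]
            have := (hf01 n (X n ω - (r - δ))).2
            linarith
          · simp only [Pi.add_apply]
            rw [Set.indicator_of_notMem (show ω ∉ {ω | X n ω ≤ r} from h)]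
            have hy : δ < X n ω - (r - δ) := by
              push_neg at h; linarith
            have hmem : δ ≤ |X n ω - (r - δ)| := by
              rw [abs_of_pos (by linarith)]; linarith
            have hd := hn3 _ hmem
            rw [if_neg (by linarith : ¬ X n ω - (r - δ) ≤ 0), Real.dist_eq] at hd
            have := abs_lt.mp hd
            linarith [this.1])
      calc (∫ ω, f n (X n ω - (r - δ)) ∂ μ n)
          ≤ ∫ ω, (Set.indicator {ω | X n ω ≤ r} (fun _ => (1:ℝ)) ω + ε / 3) ∂ μ n := this
        _ = (∫ ω, Set.indicator {ω | X n ω ≤ r} (fun _ => (1:ℝ)) ω ∂ μ n) + ε / 3 := by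
            rw [integral_add ((integrable_const (1:ℝ)).indicator hs) (integrable_const _),
              integral_const, Measure.real, measure_univ, ENNReal.toReal_one, one_smul]
    rw [Real.dist_eq, abs_lt]
    obtain ⟨a1, a2⟩ := abs_lt.mp hn1
    obtain ⟨b1, b2⟩ := abs_lt.mp hn2
    obtain ⟨c1, c2⟩ := abs_lt.mp hprU
    obtain ⟨d1, d2⟩ := abs_lt.mp hprL
    constructor <;> linarith
  obtain ⟨N, hN⟩ := eventually_atTop.mp key
  exact ⟨N, hN⟩
end
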